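/- Let (C, W) be a split-generated category with weak equivalences. Then the three congruences ∼_ℓ, ∼_r, and ∼_W on C coincide, where ∼_ℓ (resp. ∼_r) is the least congruence containing the relation: f R_ℓ g iff there is a weak equivalence σ : B → C with σf = σg (resp. f R_r g iff there is a weak equivalence s : C → A with fs = gs), and f ∼_W g iff γf = γg in the localization. -/
import Mathlib


open CategoryTheory

variable {C : Type*} [Category C]

inductive SplitGenChain (W : MorphismProperty C) : ∀ {X Y : C}, (X ⟶ Y) → Prop
  | of {X Y : C} (f : X ⟶ Y) (hW : W f) (hs : IsSplitMono f ∨ IsSplitEpi f) :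
      SplitGenChain W f
  | comp {X Y Z : C} {f : X ⟶ Y} {g : Y ⟶ Z} :
      SplitGenChain W f → SplitGenChain W g → SplitGenChain W (f ≫ g)

def SplitGenerated (W : MorphismProperty C) : Prop :=
  ∀ ⦃X Y : C⦄ (f : X ⟶ Y), W f → SplitGenChain W f

/-- `f R_ℓ g` iff there is a weak equivalence `σ` with `σf = σg`. -/
def Rl (W : MorphismProperty C) : HomRel C :=
  fun {_ B} f g => ∃ (Z : C) (σ : B ⟶ Z), W σ ∧ f ≫ σ = g ≫ σ

/-- `f R_r g` iff there is a weak equivalence `s` with `fs = gs`. -/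
def Rr (W : MorphismProperty C) : HomRel C :=
  fun {A _} f g => ∃ (Z : C) (s : Z ⟶ A), W s ∧ s ≫ f = s ≫ g

/-- The least congruence containing a `HomRel`, as the kernel of the quotient functor. -/
def leastCong (R : HomRel C) : HomRel C :=
  fun {_ _} f g =>
    (CategoryTheory.Quotient.functor R).map f = (CategoryTheory.Quotient.functor R).map g

lemma rl_inverts (W : MorphismProperty C) [W.ContainsIdentities]
    [W.HasTwoOutOfThreeProperty] (hsg : SplitGenerated W) :
    W.IsInvertedBy (Quotient.functor (Rl W)) := by
  suffices h : ∀ ⦃X Y : C⦄ ⦃σ : X ⟶ Y⦄, SplitGenChain W σ →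
      IsIso ((Quotient.functor (Rl W)).map σ) from fun X Y σ hσ => h (hsg σ hσ)
  intro X Y σ hσ
  induction hσ with
  | of f hW hs =>
    rcases hs with hm | he
    · have hr : f ≫ retraction f = 𝟙 _ := IsSplitMono.id f
      have hrW : W (retraction f) :=
        W.of_precomp f (retraction f) hW (by rw [hr]; exact W.id_mem _)
      refine ⟨⟨(Quotient.functor (Rl W)).map (retraction f), ?_, ?_⟩⟩
      · rw [← CategoryTheory.Functor.map_comp, hr, CategoryTheory.Functor.map_id]
      · rw [← CategoryTheory.Functor.map_comp, ← CategoryTheory.Functor.map_id]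
        exact CategoryTheory.Quotient.sound _ ⟨_, retraction f, hrW, by
          rw [Category.assoc, hr, Category.comp_id, Category.id_comp]⟩
    · have ht : section_ f ≫ f = 𝟙 _ := IsSplitEpi.id f
      refine ⟨⟨(Quotient.functor (Rl W)).map (section_ f), ?_, ?_⟩⟩
      · rw [← CategoryTheory.Functor.map_comp, ← CategoryTheory.Functor.map_id]
        exact CategoryTheory.Quotient.sound _ ⟨_, f, hW, by
          rw [Category.assoc, ht, Category.comp_id, Category.id_comp]⟩
      · rw [← CategoryTheory.Functor.map_comp, ht, CategoryTheory.Functor.map_id]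
  | comp _ _ ihf ihg =>
    rw [CategoryTheory.Functor.map_comp]
    exact @IsIso.comp_isIso _ _ _ _ _ _ _ ihf ihg

lemma rr_inverts (W : MorphismProperty C) [W.ContainsIdentities]
    [W.HasTwoOutOfThreeProperty] (hsg : SplitGenerated W) :
    W.IsInvertedBy (Quotient.functor (Rr W)) := by
  suffices h : ∀ ⦃X Y : C⦄ ⦃σ : X ⟶ Y⦄, SplitGenChain W σ →
      IsIso ((Quotient.functor (Rr W)).map σ) from fun X Y σ hσ => h (hsg σ hσ)
  intro X Y σ hσ
  induction hσ with
  | of f hW hs =>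
    rcases hs with hm | he
    · have hr : f ≫ retraction f = 𝟙 _ := IsSplitMono.id f
      refine ⟨⟨(Quotient.functor (Rr W)).map (retraction f), ?_, ?_⟩⟩
      · rw [← CategoryTheory.Functor.map_comp, hr, CategoryTheory.Functor.map_id]
      · rw [← CategoryTheory.Functor.map_comp, ← CategoryTheory.Functor.map_id]
        exact CategoryTheory.Quotient.sound _ ⟨_, f, hW, by
          rw [← Category.assoc, hr, Category.id_comp, Category.comp_id]⟩
    · have ht : section_ f ≫ f = 𝟙 _ := IsSplitEpi.id f
      have htW : W (section_ f) :=
        W.of_postcomp (section_ f) f hW (by rw [ht]; exact W.id_mem _)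
      refine ⟨⟨(Quotient.functor (Rr W)).map (section_ f), ?_, ?_⟩⟩
      · rw [← CategoryTheory.Functor.map_comp, ← CategoryTheory.Functor.map_id]
        exact CategoryTheory.Quotient.sound _ ⟨_, section_ f, htW, by
          rw [← Category.assoc, ht, Category.id_comp, Category.comp_id]⟩
      · rw [← CategoryTheory.Functor.map_comp, ht, CategoryTheory.Functor.map_id]
  | comp _ _ ihf ihg =>
    rw [CategoryTheory.Functor.map_comp]
    exact @IsIso.comp_isIso _ _ _ _ _ _ _ ihf ihg

/-- Proposition 3.18: in a split-generated category with weak equivalences, the congruences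
`∼_ℓ`, `∼_r` and `∼_W` all coincide. -/
theorem stmt9 (W : MorphismProperty C) [W.ContainsIdentities]
    [W.HasTwoOutOfThreeProperty] (hsg : SplitGenerated W)
    {X Y : C} (f g : X ⟶ Y) :
    (leastCong (Rl W) f g ↔ W.Q.map f = W.Q.map g) ∧
    (leastCong (Rr W) f g ↔ W.Q.map f = W.Q.map g) := by
  have Hl : ∀ (x y : C) (a b : x ⟶ y), Rl W a b → W.Q.map a = W.Q.map b := by
    rintro x y a b ⟨Z, σ, hσ, hab⟩
    have : IsIso (W.Q.map σ) := W.Q_inverts σ hσ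
    have h := congrArg W.Q.map hab
    rw [CategoryTheory.Functor.map_comp, CategoryTheory.Functor.map_comp] at h
    exact (cancel_mono (W.Q.map σ)).1 h
  have Hr : ∀ (x y : C) (a b : x ⟶ y), Rr W a b → W.Q.map a = W.Q.map b := by
    rintro x y a b ⟨Z, s, hs, hab⟩
    have : IsIso (W.Q.map s) := W.Q_inverts s hs
    have h := congrArg W.Q.map hab
    rw [CategoryTheory.Functor.map_comp, CategoryTheory.Functor.map_comp] at h
    exact (cancel_epi (W.Q.map s)).1 h
  constructor
  · constructor
    · intro h
      rw [← Quotient.lift_map_functor_map (Rl W) W.Q Hl f,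
        ← Quotient.lift_map_functor_map (Rl W) W.Q Hl g, h]
    · intro h
      show (Quotient.functor (Rl W)).map f = (Quotient.functor (Rl W)).map g
      rw [← Localization.Construction.fac (Quotient.functor (Rl W)) (rl_inverts W hsg)]
      exact congrArg (Localization.Construction.lift _ (rl_inverts W hsg)).map h
  · constructor
    · intro h
      rw [← Quotient.lift_map_functor_map (Rr W) W.Q Hr f,
        ← Quotient.lift_map_functor_map (Rr W) W.Q Hr g, h]
    · intro h
      show (Quotient.functor (Rr W)).map f = (Quotient.functor (Rr W)).map g
      rw [← Localization.Construction.fac (Quotient.functor (Rr W)) (rr_inverts W hsg)]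
      exact congrArg (Localization.Construction.lift _ (rr_inverts W hsg)).map h
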